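/- Let G be a graph and D_s, D_t two dominating sets of G of the same size k. Then D_s can be reconfigured into D_t under token jumping (all intermediate sets are dominating sets of size exactly k, each step replaces one vertex by an arbitrary vertex) if and only if D_s can be reconfigured into D_t under token addition/removal with threshold k+1 (each step adds or removes one vertex, all intermediate sets are dominating sets of size at most k+1). -/
import Mathlib


def FDominates {V : Type*} (G : SimpleGraph V) (D : Finset V) : Prop :=
  ∀ v : V, ∃ d ∈ D, d = v ∨ G.Adj d v

/-- A token-jumping step: replace one vertex of the dominating set by an arbitrary
new vertex; both sets are dominating of size exactly `k`. -/
def TJStep {V : Type*} [DecidableEq V] (G : SimpleGraph V) (k : ℕ)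
    (D D' : Finset V) : Prop :=
  FDominates G D ∧ FDominates G D' ∧ D.card = k ∧ D'.card = k ∧
    ∃ u v : V, u ∈ D ∧ v ∉ D ∧ D' = insert v (D.erase u)

/-- A token addition/removal step with threshold `k+1`: add or remove one vertex,
all sets dominating of size at most `k+1`. -/
def TARStep {V : Type*} [DecidableEq V] (G : SimpleGraph V) (k : ℕ)
    (D D' : Finset V) : Prop :=
  FDominates G D ∧ FDominates G D' ∧ D.card ≤ k + 1 ∧ D'.card ≤ k + 1 ∧
    ((∃ v : V, v ∉ D ∧ D' = insert v D) ∨ (∃ v : V, v ∈ D ∧ D' = D.erase v))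

lemma fdom_mono {V : Type*} (G : SimpleGraph V) {D E : Finset V} (h : D ⊆ E)
    (hD : FDominates G D) : FDominates G E := fun v => by
  obtain ⟨d, hd, hv⟩ := hD v
  exact ⟨d, h hd, hv⟩

lemma tar_inv {V : Type*} [DecidableEq V] (G : SimpleGraph V) (k : ℕ)
    (Ds D : Finset V) (hDs : FDominates G Ds) (hcs : Ds.card = k)
    (h : Relation.ReflTransGen (TARStep G k) Ds D) :
    ∃ S : Finset V, FDominates G S ∧ S.card = k ∧
      Relation.ReflTransGen (TJStep G k) Ds S ∧
      ((D ⊆ S ∧ D.card ≤ k) ∨ (S ⊆ D ∧ D.card = k + 1)) := by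
  induction h with
  | refl =>
    exact ⟨Ds, hDs, hcs, .refl, Or.inl ⟨subset_rfl, le_of_eq hcs⟩⟩
  | @tail b c hsteps step ih =>
    obtain ⟨S, hSdom, hScard, hSreach, hcase⟩ := ih
    obtain ⟨hb, hc, hbcard, hccard, hadd | hrem⟩ := step
    · -- addition step: c = insert v b
      obtain ⟨v, hvb, rfl⟩ := hadd
      rcases hcase with ⟨hbS, hbk⟩ | ⟨hSb, hbk⟩
      · by_cases hvS : v ∈ S
        · refine ⟨S, hSdom, hScard, hSreach, Or.inl ⟨?_, ?_⟩⟩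
          · exact Finset.insert_subset hvS hbS
          · calc (insert v b).card ≤ S.card := Finset.card_le_card (Finset.insert_subset hvS hbS)
              _ = k := hScard
        · rcases eq_or_lt_of_le hbk with hbk' | hbk'
          · -- b.card = k, so b = S
            have hbSeq : b = S :=
              Finset.eq_of_subset_of_card_le hbS (by rw [hScard, hbk'])
            refine ⟨S, hSdom, hScard, hSreach, Or.inr ⟨?_, ?_⟩⟩
            · rw [hbSeq]; exact Finset.subset_insert _ _
            · rw [Finset.card_insert_of_notMem hvb, hbk']
          · -- b ⊂ S : jump from some u ∈ S \ b to v
            have hss : b ⊂ S := hbS.ssubset_of_ne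
              (fun h => by rw [h, hScard] at hbk'; omega)
            obtain ⟨u, huS, hub⟩ := Finset.exists_of_ssubset hss
            have hbe : b ⊆ S.erase u := fun x hx =>
              Finset.mem_erase.mpr ⟨fun h => hub (h ▸ hx), hbS hx⟩
            have hcS' : insert v b ⊆ insert v (S.erase u) :=
              Finset.insert_subset_insert _ hbe
            have hvSe : v ∉ S.erase u := fun h => hvS (Finset.mem_of_mem_erase h)
            have hcard' : (insert v (S.erase u)).card = k := by
              rw [Finset.card_insert_of_notMem hvSe,
                Finset.card_erase_of_mem huS, hScard]
              omega
            have hdom' : FDominates G (insert v (S.erase u)) := fdom_mono G hcS' hc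
            refine ⟨insert v (S.erase u), hdom', hcard',
              hSreach.tail ⟨hSdom, hdom', hScard, hcard', u, v, huS, hvS, rfl⟩,
              Or.inl ⟨hcS', ?_⟩⟩
            rw [Finset.card_insert_of_notMem hvb]
            omega
      · -- b.card = k + 1, adding would exceed k + 1
        exfalso
        rw [Finset.card_insert_of_notMem hvb, hbk] at hccard
        omega
    · -- removal step: c = b.erase v
      obtain ⟨v, hvb, rfl⟩ := hrem
      rcases hcase with ⟨hbS, hbk⟩ | ⟨hSb, hbk⟩
      · refine ⟨S, hSdom, hScard, hSreach, Or.inl ⟨(Finset.erase_subset _ _).trans hbS, ?_⟩⟩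
        exact le_trans (Finset.card_le_card (Finset.erase_subset _ _)) hbk
      · have hccard' : (b.erase v).card = k := by
          rw [Finset.card_erase_of_mem hvb, hbk]; omega
        by_cases hvS : v ∈ S
        · -- b = insert w S, jump v → w
          have hss : S ⊂ b := hSb.ssubset_of_ne
            (fun h => by rw [← h, hScard] at hbk; omega)
          obtain ⟨w, hwb, hwS⟩ := Finset.exists_of_ssubset hss
          have hbeq : b = insert w S := by
            refine (Finset.eq_of_subset_of_card_le (Finset.insert_subset hwb hSb) ?_).symm
            rw [Finset.card_insert_of_notMem hwS, hScard, hbk]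
          have hwv : w ≠ v := fun h => hwS (h ▸ hvS)
          have hceq : b.erase v = insert w (S.erase v) := by
            rw [hbeq, Finset.erase_insert_of_ne hwv]
          refine ⟨b.erase v, hc, hccard',
            hSreach.tail ⟨hSdom, hc, hScard, hccard', v, w, hvS, hwS, hceq⟩,
            Or.inl ⟨subset_rfl, le_of_eq hccard'⟩⟩
        · -- v ∉ S so S ⊆ erase, cards equal, S = b.erase v
          have hsub : S ⊆ b.erase v := fun x hx =>
            Finset.mem_erase.mpr ⟨fun h => hvS (h ▸ hx), hSb hx⟩
          have : S = b.erase v :=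
            Finset.eq_of_subset_of_card_le hsub (by rw [hccard', hScard])
          exact ⟨S, hSdom, hScard, hSreach, Or.inl ⟨this ▸ subset_rfl, by rw [hccard']⟩⟩

theorem tj_iff_tar {V : Type*} [DecidableEq V] (G : SimpleGraph V) (k : ℕ)
    (Ds Dt : Finset V) (hDs : FDominates G Ds) (hDt : FDominates G Dt)
    (hcs : Ds.card = k) (hct : Dt.card = k) :
    Relation.ReflTransGen (TJStep G k) Ds Dt ↔
      Relation.ReflTransGen (TARStep G k) Ds Dt := by
  constructor
  · intro h
    induction h with
    | refl => exact .refl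
    | @tail b c hsteps step ih =>
      obtain ⟨hb, hc, hbk, hck, u, v, hu, hv, hE⟩ := step
      have huv : u ≠ v := fun h => hv (h ▸ hu)
      have hdomM : FDominates G (insert v b) := fdom_mono G (Finset.subset_insert _ _) hb
      have hcardM : (insert v b).card = k + 1 := by
        rw [Finset.card_insert_of_notMem hv, hbk]
      have step1 : TARStep G k b (insert v b) :=
        ⟨hb, hdomM, by omega, le_of_eq hcardM, Or.inl ⟨v, hv, rfl⟩⟩
      have step2 : TARStep G k (insert v b) c := by
        refine ⟨hdomM, hc, le_of_eq hcardM, by omega,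
          Or.inr ⟨u, Finset.mem_insert_of_mem hu, ?_⟩⟩
        rw [hE, Finset.erase_insert_of_ne huv.symm]
      exact ((ih hb hbk).tail step1).tail step2
  · intro h
    obtain ⟨S, hSdom, hScard, hSreach, hcase⟩ := tar_inv G k Ds Dt hDs hcs h
    rcases hcase with ⟨hsub, _⟩ | ⟨_, hk⟩
    · have : Dt = S := Finset.eq_of_subset_of_card_le hsub (by rw [hScard, hct])
      rwa [this]
    · omega
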